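/- arXiv:1404.4884 — 2 statements merged into one kernel-verified Lean document; each statement's English description precedes it below -/
import Mathlib

section
/- If P is a 2×2 frequency matrix with ε̂ = (p00·p11 − p01·p10)/(p0*·p1*) satisfying 0 < ε̂ < 1, then the confusion matrix C = (1/(1−ε̂))·(P − ε̂·diag(p0*, p1*)) has nonnegative entries that sum to 1. -/
theorem confusion_is_frequency_matrix (p00 p01 p10 p11 : ℝ)
    (h00 : 0 ≤ p00) (h01 : 0 ≤ p01) (h10 : 0 ≤ p10) (h11 : 0 ≤ p11)
    (hsum : p00 + p01 + p10 + p11 = 1)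
    (hr0 : 0 < p00 + p01) (hr1 : 0 < p10 + p11)
    (eps : ℝ)
    (heps : eps = (p00 * p11 - p01 * p10) / ((p00 + p01) * (p10 + p11)))
    (heps0 : 0 < eps) (heps1 : eps < 1) :
    0 ≤ (p00 - eps * (p00 + p01)) / (1 - eps) ∧
    0 ≤ p01 / (1 - eps) ∧
    0 ≤ p10 / (1 - eps) ∧
    0 ≤ (p11 - eps * (p10 + p11)) / (1 - eps) ∧
    (p00 - eps * (p00 + p01)) / (1 - eps) + p01 / (1 - eps) +
      p10 / (1 - eps) + (p11 - eps * (p10 + p11)) / (1 - eps) = 1 := by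
  have hd : 0 < 1 - eps := by linarith
  have h1 : p00 - eps * (p00 + p01) = p10 * (p00 + p01) / (p10 + p11) := by
    rw [heps]
    field_simp [heps, ne_of_gt hr0, ne_of_gt hr1]
    ring
  have h2 : p11 - eps * (p10 + p11) = p01 * (p10 + p11) / (p00 + p01) := by
    rw [heps]
    field_simp [heps, ne_of_gt hr0, ne_of_gt hr1]
    ring
  refine ⟨div_nonneg ?_ hd.le, div_nonneg h01 hd.le, div_nonneg h10 hd.le,
    div_nonneg ?_ hd.le, ?_⟩
  · rw [h1]; positivity
  · rw [h2]; positivity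
  · have he : eps * (p00 + p01) + eps * (p10 + p11) = eps := by nlinarith
    field_simp
    linarith
end

section
/- In the Maximum Cause epistemology with ε0 = r00 − √(r01·r10) and ε1 = r11 − √(r01·r10), the corresponding confusion distribution is σ0 = √r10/(√r01 + √r10) and σ1 = √r01/(√r01 + √r10), i.e., these σ values satisfy ε0 = 1 − r01/σ1 and ε1 = 1 − r10/σ0. -/
theorem maximum_cause_sigma (r00 r01 r10 r11 : ℝ)
    (h00 : 0 < r00) (h01 : 0 < r01) (h10 : 0 < r10) (h11 : 0 < r11)
    (hrow0 : r00 + r01 = 1) (hrow1 : r10 + r11 = 1)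
    (hdet : 0 < r00 * r11 - r01 * r10)
    (s0 s1 : ℝ)
    (hs0 : s0 = Real.sqrt r10 / (Real.sqrt r01 + Real.sqrt r10))
    (hs1 : s1 = Real.sqrt r01 / (Real.sqrt r01 + Real.sqrt r10)) :
    r00 - Real.sqrt (r01 * r10) = 1 - r01 / s1 ∧
    r11 - Real.sqrt (r01 * r10) = 1 - r10 / s0 := by
  have ha : 0 < Real.sqrt r01 := Real.sqrt_pos.2 h01
  have hb : 0 < Real.sqrt r10 := Real.sqrt_pos.2 h10
  have hab : 0 < Real.sqrt r01 + Real.sqrt r10 := by linarith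
  have ha2 : Real.sqrt r01 * Real.sqrt r01 = r01 := Real.mul_self_sqrt h01.le
  have hb2 : Real.sqrt r10 * Real.sqrt r10 = r10 := Real.mul_self_sqrt h10.le
  have hmul : Real.sqrt (r01 * r10) = Real.sqrt r01 * Real.sqrt r10 :=
    Real.sqrt_mul h01.le _
  subst hs0 hs1
  constructor
  · rw [hmul]
    field_simp
    nlinarith [ha2, hb2]
  · rw [hmul]
    field_simp
    nlinarith [ha2, hb2]
end
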